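/- arXiv:1208.4052 — 2 statements merged into one kernel-verified Lean document; each statement's English description precedes it below -/
import Mathlib

section
/- For every bidegree (k,κ) with n + k − κ > 0, one has ker Q ∩ W_{k,κ} = Q(W_{k−1,κ−1}) and ker Q* ∩ W_{k,κ} = Q*(W_{k+1,κ+1}); moreover ker Q* ∩ W_{k,κ} = Q*(ker Q ∩ W_{k+1,κ+1}). That is, on such components the kernel of Q equals its image and the kernel of Q* equals its image, which is already the image of ker Q under Q*. -/
open MvPolynomial Finset

namespace SpinQuant

noncomputable section

/-- Diagonal entries of the signature-`(p,q)` bilinear form `η` on `ℝⁿ`, `n = p + q`: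
`+1` for the first `p` indices and `-1` for the last `q` ones.  Since `η` is diagonal
and equal to its inverse, these are simultaneously the `η_{ii}` and the `η^{ii}`. -/
def eta (p q : ℕ) (i : Fin (p + q)) : ℝ := if (i : ℕ) < p then 1 else -1

/-- The supercommutative algebra `W = ℝ[p₁,…,pₙ] ⊗ Λ(ξ¹,…,ξⁿ)`, modeled as families of
polynomials in the even variables `p_i`, indexed by the subsets of `Fin n` recording the
monomials in the odd variables `ξ^i` (a subset `S` stands for the exterior monomial
`ξ^{i₁} ∧ ⋯ ∧ ξ^{iκ}` with `i₁ < ⋯ < iκ` the elements of `S`). -/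
abbrev W (p q : ℕ) := Finset (Fin (p + q)) → MvPolynomial (Fin (p + q)) ℝ

/-- Koszul sign of moving `ξ^i` through the monomial `ξ^S`. -/
def sgn (p q : ℕ) (i : Fin (p + q)) (S : Finset (Fin (p + q))) : ℝ :=
  (-1) ^ (S.filter (fun j => j < i)).card

/-- Multiplication by the even variable `p_i`. -/
def pMul (p q : ℕ) (i : Fin (p + q)) : Module.End ℝ (W p q) where
  toFun f S := X i * f S
  map_add' f g := by funext S; simp [mul_add]
  map_smul' c f := by funext S; simp [mul_smul_comm]

/-- The partial derivative `∂/∂p_i`. -/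
def pD (p q : ℕ) (i : Fin (p + q)) : Module.End ℝ (W p q) where
  toFun f S := pderiv i (f S)
  map_add' f g := by funext S; simp
  map_smul' c f := by funext S; simp

/-- Exterior multiplication by the odd variable `ξ^i`. -/
def xiMul (p q : ℕ) (i : Fin (p + q)) : Module.End ℝ (W p q) where
  toFun f S := if i ∈ S then sgn p q i S • f (S.erase i) else 0
  map_add' f g := by funext S; by_cases h : i ∈ S <;> simp [h, smul_add]
  map_smul' c f := by funext S; by_cases h : i ∈ S <;> simp [h, smul_smul, mul_comm]

/-- The odd superderivation `∂/∂ξ^i`, determined by `∂_{ξ^i}(ξ^j) = δ_i^j`. -/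
def xiD (p q : ℕ) (i : Fin (p + q)) : Module.End ℝ (W p q) where
  toFun f S := if i ∈ S then 0 else sgn p q i (insert i S) • f (insert i S)
  map_add' f g := by funext S; by_cases h : i ∈ S <;> simp [h, smul_add]
  map_smul' c f := by funext S; by_cases h : i ∈ S <;> simp [h, smul_smul, mul_comm]

/-- `R`, multiplication by `η^{ij} p_i p_j`. -/
def opR (p q : ℕ) : Module.End ℝ (W p q) := ∑ i, eta p q i • (pMul p q i * pMul p q i)

/-- The even Euler operator `ℰ = p_i ∂_{p_i}`. -/
def opE (p q : ℕ) : Module.End ℝ (W p q) := ∑ i, pMul p q i * pD p q i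

/-- The trace operator `T = η_{ij} ∂_{p_i} ∂_{p_j}`. -/
def opT (p q : ℕ) : Module.End ℝ (W p q) := ∑ i, eta p q i • (pD p q i * pD p q i)

/-- The odd Euler operator `Σ = ξ^i ∂_{ξ^i}`. -/
def opS (p q : ℕ) : Module.End ℝ (W p q) := ∑ i, xiMul p q i * xiD p q i

/-- `Q`, multiplication by `ξ^i p_i`. -/
def opQ (p q : ℕ) : Module.End ℝ (W p q) := ∑ i, xiMul p q i * pMul p q i

/-- `Q* = ∂_{ξ^i} ∂_{p_i}`. -/
def opQs (p q : ℕ) : Module.End ℝ (W p q) := ∑ i, xiD p q i * pD p q i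

/-- The Koszul differential `δ = η_{ij} ξ^i ∂_{p_j}`. -/
def opd (p q : ℕ) : Module.End ℝ (W p q) := ∑ i, eta p q i • (xiMul p q i * pD p q i)

/-- The Koszul codifferential `δ* = η^{ij} p_i ∂_{ξ^j}`. -/
def opds (p q : ℕ) : Module.End ℝ (W p q) := ∑ i, eta p q i • (pMul p q i * xiD p q i)

/-- The bihomogeneous component `W_{k,κ}`: polynomial degree `k` in the `p` variables and
exterior degree `κ` in the `ξ` variables. -/
def Wc (p q : ℕ) (k κ : ℕ) : Submodule ℝ (W p q) where
  carrier := { f | (∀ S, f S ∈ homogeneousSubmodule (Fin (p + q)) ℝ k) ∧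
      ∀ S, S.card ≠ κ → f S = 0 }
  add_mem' := fun ha hb => ⟨fun S => add_mem (ha.1 S) (hb.1 S),
    fun S h => by simp [Pi.add_apply, ha.2 S h, hb.2 S h]⟩
  zero_mem' := ⟨fun S => zero_mem _, fun S _ => rfl⟩
  smul_mem' := fun c f hf => ⟨fun S => Submodule.smul_mem _ c (hf.1 S),
    fun S h => by simp [Pi.smul_apply, hf.2 S h]⟩

/-- The component `W_{k,κ}` with integer indices, with the convention that it is the zero
subspace as soon as one of the indices is negative. -/
def WcZ (p q : ℕ) (k κ : ℤ) : Submodule ℝ (W p q) :=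
  if 0 ≤ k ∧ 0 ≤ κ then Wc p q k.toNat κ.toNat else ⊥

variable {p q : ℕ}

lemma sgn_mul_self (i : Fin (p+q)) (S : Finset (Fin (p+q))) : sgn p q i S * sgn p q i S = 1 := by
  unfold sgn
  rw [← pow_add, ← two_mul, pow_mul]
  norm_num

lemma sgn_insert (i j : Fin (p+q)) (S : Finset (Fin (p+q))) (h : i ∉ S) :
    sgn p q j (insert i S) = (if i < j then -1 else 1) * sgn p q j S := by
  unfold sgn
  rw [Finset.filter_insert]
  by_cases hij : i < j
  · rw [if_pos hij, Finset.card_insert_of_notMem (fun hc => h (Finset.mem_of_mem_filter i hc)),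
      pow_succ, if_pos hij]
    ring
  · rw [if_neg hij, if_neg hij, one_mul]

lemma sgn_erase (i j : Fin (p+q)) (S : Finset (Fin (p+q))) (h : i ∈ S) :
    sgn p q j (S.erase i) = (if i < j then -1 else 1) * sgn p q j S := by
  have h2 : i ∉ S.erase i := Finset.notMem_erase i S
  have := sgn_insert (p := p) (q := q) i j (S.erase i) h2
  rw [Finset.insert_erase h] at this
  rw [this]
  by_cases hij : i < j <;> simp [hij]

lemma eps_add (i j : Fin (p+q)) (h : i ≠ j) :
    (if i < j then (-1:ℝ) else 1) + (if j < i then -1 else 1) = 0 := by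
  rcases lt_or_gt_of_ne h with h1 | h1
  · rw [if_pos h1, if_neg (asymm h1)]; ring
  · rw [if_neg (asymm h1), if_pos h1]; ring
lemma my_pderiv_comm {m : ℕ} (i j : Fin m) (g : MvPolynomial (Fin m) ℝ) :
    pderiv i (pderiv j g) = pderiv j (pderiv i g) := by
  induction g using MvPolynomial.induction_on' with
  | monomial a c =>
    simp only [pderiv_monomial]
    by_cases h : i = j
    · subst h; rfl
    · have h1 : ((a - Finsupp.single j 1 : Fin m →₀ ℕ)) i = a i := by
        simp [Finsupp.tsub_apply, Finsupp.single_apply, Ne.symm h]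
      have h2 : ((a - Finsupp.single i 1 : Fin m →₀ ℕ)) j = a j := by
        simp [Finsupp.tsub_apply, Finsupp.single_apply, h]
      rw [h1, h2]
      have h3 : a - Finsupp.single j 1 - Finsupp.single i 1
          = a - Finsupp.single i 1 - Finsupp.single j 1 := by
        ext x; simp only [Finsupp.tsub_apply]; omega
      rw [h3, mul_right_comm]
  | add f g hf hg => simp [hf, hg]

lemma xiMul_apply (i : Fin (p+q)) (f : W p q) (S : Finset (Fin (p+q))) :
    xiMul p q i f S = if i ∈ S then sgn p q i S • f (S.erase i) else 0 := rfl

lemma xiD_apply (i : Fin (p+q)) (f : W p q) (S : Finset (Fin (p+q))) :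
    xiD p q i f S = if i ∈ S then 0 else sgn p q i (insert i S) • f (insert i S) := rfl

lemma pMul_apply (i : Fin (p+q)) (f : W p q) (S : Finset (Fin (p+q))) :
    pMul p q i f S = X i * f S := rfl

lemma pD_apply (i : Fin (p+q)) (f : W p q) (S : Finset (Fin (p+q))) :
    pD p q i f S = pderiv i (f S) := rfl
open Module in
lemma g7 (i j : Fin (p+q)) : pMul p q i * xiMul p q j = xiMul p q j * pMul p q i := by
  refine LinearMap.ext fun f => funext fun S => ?_
  simp only [Module.End.mul_apply, xiMul_apply, pMul_apply]
  by_cases h : j ∈ S <;> simp [h, mul_smul_comm]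

lemma g8 (i j : Fin (p+q)) : pMul p q i * xiD p q j = xiD p q j * pMul p q i := by
  refine LinearMap.ext fun f => funext fun S => ?_
  simp only [Module.End.mul_apply, xiD_apply, pMul_apply]
  by_cases h : j ∈ S <;> simp [h, mul_smul_comm]

lemma g9 (i j : Fin (p+q)) : pD p q i * xiMul p q j = xiMul p q j * pD p q i := by
  refine LinearMap.ext fun f => funext fun S => ?_
  simp only [Module.End.mul_apply, xiMul_apply, pD_apply]
  by_cases h : j ∈ S <;> simp [h]

lemma g10 (i j : Fin (p+q)) : pD p q i * xiD p q j = xiD p q j * pD p q i := by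
  refine LinearMap.ext fun f => funext fun S => ?_
  simp only [Module.End.mul_apply, xiD_apply, pD_apply]
  by_cases h : j ∈ S <;> simp [h]

lemma g5 (i j : Fin (p+q)) : pMul p q i * pMul p q j = pMul p q j * pMul p q i := by
  refine LinearMap.ext fun f => funext fun S => ?_
  simp only [Module.End.mul_apply, pMul_apply]
  ring

lemma g6 (i j : Fin (p+q)) : pD p q i * pD p q j = pD p q j * pD p q i := by
  refine LinearMap.ext fun f => funext fun S => ?_
  simp only [Module.End.mul_apply, pD_apply]
  exact my_pderiv_comm i j (f S)

lemma g4 (i j : Fin (p+q)) :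
    pD p q i * pMul p q j = pMul p q j * pD p q i + if i = j then 1 else 0 := by
  refine LinearMap.ext fun f => funext fun S => ?_
  simp only [Module.End.mul_apply, LinearMap.add_apply, pD_apply, pMul_apply]
  rw [pderiv_mul]
  by_cases h : i = j
  · subst h; simp [pderiv_X_self, pMul_apply, pD_apply, add_comm]
  · simp [pderiv_X_of_ne (Ne.symm h), h, pMul_apply, pD_apply]
lemma g1 (i j : Fin (p+q)) :
    xiMul p q i * xiMul p q j + xiMul p q j * xiMul p q i = 0 := by
  refine LinearMap.ext fun f => funext fun S => ?_
  simp only [LinearMap.add_apply, Module.End.mul_apply, LinearMap.zero_apply, Pi.add_apply,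
    Pi.zero_apply, xiMul_apply]
  by_cases hi : i ∈ S <;> by_cases hj : j ∈ S
  · by_cases hij : i = j
    · subst hij; simp [hi]
    · simp only [hi, hj, if_true, Finset.mem_erase, Ne.symm hij, hij, true_and, and_true,
        if_true, ne_eq, not_false_iff]
      rw [Finset.erase_right_comm (a := i) (b := j)]
      rw [smul_smul, smul_smul, ← add_smul]
      rw [sgn_erase i j S hi, sgn_erase j i S hj]
      have h0 := eps_add i j hij
      have : sgn p q i S * ((if i < j then (-1:ℝ) else 1) * sgn p q j S) +
          sgn p q j S * ((if j < i then (-1:ℝ) else 1) * sgn p q i S) = 0 := by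
        linear_combination (sgn p q i S * sgn p q j S) * h0
      rw [this, zero_smul]
  · simp [hi, hj, Finset.mem_erase]
  · simp [hi, hj, Finset.mem_erase]
  · simp [hi, hj]

lemma g2 (i j : Fin (p+q)) :
    xiD p q i * xiD p q j + xiD p q j * xiD p q i = 0 := by
  refine LinearMap.ext fun f => funext fun S => ?_
  simp only [LinearMap.add_apply, Module.End.mul_apply, LinearMap.zero_apply, Pi.add_apply,
    Pi.zero_apply, xiD_apply]
  by_cases hi : i ∈ S <;> by_cases hj : j ∈ S
  · simp [hi, hj]
  · simp [hi, hj, Finset.mem_insert]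
  · simp [hi, hj, Finset.mem_insert]
  · by_cases hij : i = j
    · subst hij; simp [hi]
    · simp only [hi, hj, if_false, Finset.mem_insert, hij, Ne.symm hij, false_or, if_neg,
        not_false_iff]
      have hc : insert j (insert i S) = insert i (insert j S) := Finset.insert_comm j i S
      have e1 : sgn p q j (insert i (insert j S)) =
          (if i < j then (-1:ℝ) else 1) * sgn p q j (insert j S) :=
        sgn_insert i j (insert j S) (by simp [hij, hi])
      have e2 : sgn p q i (insert j (insert i S)) =
          (if j < i then (-1:ℝ) else 1) * sgn p q i (insert i S) :=
        sgn_insert j i (insert i S) (by simp [Ne.symm hij, hj])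
      rw [hc] at e2 ⊢
      rw [e1, e2, smul_smul, smul_smul, ← add_smul]
      have h0 := eps_add i j hij
      have : sgn p q i (insert i S) * ((if i < j then (-1:ℝ) else 1) * sgn p q j (insert j S)) +
          sgn p q j (insert j S) * ((if j < i then (-1:ℝ) else 1) * sgn p q i (insert i S)) = 0 := by
        linear_combination (sgn p q i (insert i S) * sgn p q j (insert j S)) * h0
      rw [this, zero_smul]

lemma g3 (i j : Fin (p+q)) :
    xiD p q i * xiMul p q j + xiMul p q j * xiD p q i = if i = j then 1 else 0 := by
  refine LinearMap.ext fun f => funext fun S => ?_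
  by_cases hij : i = j
  · subst hij
    simp only [LinearMap.add_apply, Module.End.mul_apply, Pi.add_apply, eq_self_iff_true, if_true,
      Module.End.one_apply, xiD_apply, xiMul_apply]
    by_cases hi : i ∈ S
    · rw [if_pos hi, if_pos hi, if_neg (Finset.notMem_erase i S), smul_smul,
        Finset.insert_erase hi, sgn_mul_self, one_smul, zero_add]
    · rw [if_neg hi, if_neg hi, if_pos (Finset.mem_insert_self i S), smul_smul,
        Finset.erase_insert hi, sgn_mul_self, one_smul, add_zero]
  · simp only [LinearMap.add_apply, Module.End.mul_apply, Pi.add_apply, if_neg hij,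
      LinearMap.zero_apply, Pi.zero_apply, xiD_apply, xiMul_apply]
    by_cases hi : i ∈ S <;> by_cases hj : j ∈ S
    · simp [hi, hj, Finset.mem_erase, hij]
    · simp [hi, hj, Finset.mem_erase, hij]
    · -- i ∉ S, j ∈ S
      rw [if_neg hi, if_pos hj, if_pos (by simp [hj]), if_neg (by simp [hij, hi])]
      have hset : (insert i S).erase j = insert i (S.erase j) :=
        Finset.erase_insert_of_ne hij
      have e1 : sgn p q j (insert i S) = (if i < j then (-1:ℝ) else 1) * sgn p q j S :=
        sgn_insert i j S hi
      have e2 : sgn p q i ((insert i S).erase j) =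
          (if j < i then (-1:ℝ) else 1) * sgn p q i (insert i S) :=
        sgn_erase j i (insert i S) (by simp [hj])
      rw [hset] at e2
      rw [hset, e1, e2, smul_smul, smul_smul, ← add_smul]
      have h0 := eps_add i j hij
      have : sgn p q i (insert i S) * ((if i < j then (-1:ℝ) else 1) * sgn p q j S) +
          sgn p q j S * ((if j < i then (-1:ℝ) else 1) * sgn p q i (insert i S)) = 0 := by
        linear_combination (sgn p q i (insert i S) * sgn p q j S) * h0
      rw [this, zero_smul]
    · simp [hi, hj, Finset.mem_insert, Ne.symm hij]
lemma sum_self_neg {α : Type*} [Fintype α] (f : α → α → Module.End ℝ (W p q))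
    (h : ∀ i j, f j i = - f i j) : ∑ i, ∑ j, f i j = 0 := by
  have hs : ∑ i, ∑ j, f i j = ∑ j, ∑ i, f i j := Finset.sum_comm
  have h2 : ∑ j, ∑ i, f i j = - ∑ i, ∑ j, f i j := by
    rw [← Finset.sum_neg_distrib]
    refine Finset.sum_congr rfl fun i _ => ?_
    rw [← Finset.sum_neg_distrib]
    exact Finset.sum_congr rfl fun j _ => h i j
  have h3 : ∑ i, ∑ j, f i j = - ∑ i, ∑ j, f i j := hs.trans h2
  have h4 : (2:ℝ) • (∑ i, ∑ j, f i j) = 0 := by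
    rw [two_smul]
    nth_rewrite 1 [h3]
    exact neg_add_cancel _
  have h5 : ((2:ℝ)⁻¹ * 2) • (∑ i, ∑ j, f i j) = 0 := by rw [mul_smul, h4, smul_zero]
  norm_num at h5
  exact h5

lemma opQ_mul_opQ : opQ p q * opQ p q = 0 := by
  unfold opQ
  rw [Finset.sum_mul_sum]
  have key : ∀ i j : Fin (p+q), (xiMul p q i * pMul p q i) * (xiMul p q j * pMul p q j)
      = (xiMul p q i * xiMul p q j) * (pMul p q i * pMul p q j) := by
    intro i j
    simp only [mul_assoc]
    congr 1
    rw [← mul_assoc, g7, mul_assoc]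
  rw [Finset.sum_congr rfl fun i _ => Finset.sum_congr rfl fun j _ => key i j]
  refine sum_self_neg _ fun i j => ?_
  have h1 : xiMul p q j * xiMul p q i = -(xiMul p q i * xiMul p q j) :=
    eq_neg_of_add_eq_zero_right (g1 i j)
  rw [h1, g5 j i]
  exact neg_mul _ (pMul p q i * pMul p q j)

lemma opQs_mul_opQs : opQs p q * opQs p q = 0 := by
  unfold opQs
  rw [Finset.sum_mul_sum]
  have key : ∀ i j : Fin (p+q), (xiD p q i * pD p q i) * (xiD p q j * pD p q j)
      = (xiD p q i * xiD p q j) * (pD p q i * pD p q j) := by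
    intro i j
    simp only [mul_assoc]
    congr 1
    rw [← mul_assoc, g10, mul_assoc]
  rw [Finset.sum_congr rfl fun i _ => Finset.sum_congr rfl fun j _ => key i j]
  refine sum_self_neg _ fun i j => ?_
  have h1 : xiD p q j * xiD p q i = -(xiD p q i * xiD p q j) :=
    eq_neg_of_add_eq_zero_right (g2 i j)
  rw [h1, g6 j i]
  exact neg_mul _ (pD p q i * pD p q j)
lemma anticomm : opQ p q * opQs p q + opQs p q * opQ p q
    = opE p q + (((p:ℝ) + q) • 1 - opS p q) := by
  have key : ∀ i j : Fin (p+q),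
      (xiMul p q i * pMul p q i) * (xiD p q j * pD p q j)
        + (xiD p q j * pD p q j) * (xiMul p q i * pMul p q i)
      = if j = i then pMul p q i * pD p q j + xiD p q j * xiMul p q i else 0 := by
    intro i j
    have e1 : (xiMul p q i * pMul p q i) * (xiD p q j * pD p q j)
        = (xiMul p q i * xiD p q j) * (pMul p q i * pD p q j) := by
      simp only [mul_assoc]; congr 1
      rw [← mul_assoc, g8, mul_assoc]
    have e2 : (xiD p q j * pD p q j) * (xiMul p q i * pMul p q i)
        = (xiD p q j * xiMul p q i) * (pMul p q i * pD p q j)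
          + (if j = i then 1 else 0) * (xiD p q j * xiMul p q i) := by
      have e3 : (xiD p q j * pD p q j) * (xiMul p q i * pMul p q i)
          = (xiD p q j * xiMul p q i) * (pD p q j * pMul p q i) := by
        simp only [mul_assoc]; congr 1
        rw [← mul_assoc, g9, mul_assoc]
      rw [e3, g4 j i, mul_add]
      congr 1
      · rw [mul_ite, mul_one, mul_zero, ite_mul, one_mul, zero_mul]
    rw [e1, e2, ← add_assoc, ← add_mul]
    have e4 : xiMul p q i * xiD p q j + xiD p q j * xiMul p q i
        = if j = i then 1 else 0 := by
      rw [← g3 j i]; exact add_comm _ _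
    rw [e4]
    by_cases h : j = i <;> simp [h]
  unfold opQ opQs
  rw [Finset.sum_mul_sum, Finset.sum_mul_sum]
  rw [show (∑ x : Fin (p+q), ∑ j : Fin (p+q), (xiD p q x * pD p q x) * (xiMul p q j * pMul p q j))
      = ∑ x : Fin (p+q), ∑ j : Fin (p+q), (xiD p q j * pD p q j) * (xiMul p q x * pMul p q x)
    from Finset.sum_comm]
  rw [← Finset.sum_add_distrib]
  have step : ∀ i : Fin (p+q), (∑ j, (xiMul p q i * pMul p q i) * (xiD p q j * pD p q j))
      + ∑ j, (xiD p q j * pD p q j) * (xiMul p q i * pMul p q i)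
      = pMul p q i * pD p q i + xiD p q i * xiMul p q i := by
    intro i
    rw [← Finset.sum_add_distrib,
      Finset.sum_congr rfl fun j _ => key i j]
    rw [Finset.sum_ite_eq' Finset.univ i
      (fun j => pMul p q i * pD p q j + xiD p q j * xiMul p q i)]
    simp
  rw [Finset.sum_congr rfl fun i _ => step i, Finset.sum_add_distrib]
  congr 1
  have hdiag : ∀ i : Fin (p+q), xiD p q i * xiMul p q i = 1 - xiMul p q i * xiD p q i := by
    intro i
    have h := g3 i i
    rw [if_pos rfl] at h
    exact eq_sub_of_add_eq h
  rw [Finset.sum_congr rfl fun i _ => hdiag i, Finset.sum_sub_distrib]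
  congr 1
  · rw [Finset.sum_const, Finset.card_univ, Fintype.card_fin]
    rw [show ((p:ℝ) + q) = ((p + q : ℕ) : ℝ) by push_cast; ring]
    rw [Nat.cast_smul_eq_nsmul]
lemma degF {m : ℕ} (a : Fin m →₀ ℕ) : a.degree = ∑ i, a i :=
  Finset.sum_subset (Finset.subset_univ _) (fun x _ hx => Finsupp.notMem_support_iff.mp hx)

lemma X_mul_mono {m : ℕ} (i : Fin m) (a : Fin m →₀ ℕ) (c : ℝ) :
    X i * monomial a c = monomial (a + Finsupp.single i 1) c := by
  rw [X, monomial_mul, one_mul, add_comm]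

lemma euler_mono {m : ℕ} (a : Fin m →₀ ℕ) (c : ℝ) :
    ∑ i, X i * pderiv i (monomial a c) = a.degree • (monomial a c : MvPolynomial (Fin m) ℝ) := by
  have hterm : ∀ i : Fin m, X i * pderiv i (monomial a c) = (a i) • monomial a c := by
    intro i
    rw [pderiv_monomial]
    by_cases h : a i = 0
    · simp [h]
    · rw [X_mul_mono]
      have hs : a - Finsupp.single i 1 + Finsupp.single i 1 = a := by
        ext x
        simp only [Finsupp.add_apply, Finsupp.tsub_apply, Finsupp.single_apply]
        by_cases hx : i = x
        · subst hx; simp; omega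
        · simp [hx]
      rw [hs, smul_monomial]
      congr 1
      rw [nsmul_eq_mul, mul_comm]
  rw [Finset.sum_congr rfl fun i _ => hterm i, ← Finset.sum_smul, degF]

lemma euler_hom {m k : ℕ} (g : MvPolynomial (Fin m) ℝ)
    (hg : g ∈ homogeneousSubmodule (Fin m) ℝ k) :
    ∑ i, X i * pderiv i g = k • g := by
  have key : ∀ i, pderiv i g = pderiv i (∑ v ∈ g.support, monomial v (coeff v g)) := by
    intro i; rw [← g.as_sum]
  calc ∑ i, X i * pderiv i g
      = ∑ i, ∑ v ∈ g.support, X i * pderiv i (monomial v (coeff v g)) := by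
        refine Finset.sum_congr rfl fun i _ => ?_
        rw [key i, map_sum, Finset.mul_sum]
    _ = ∑ v ∈ g.support, ∑ i, X i * pderiv i (monomial v (coeff v g)) := Finset.sum_comm
    _ = ∑ v ∈ g.support, k • monomial v (coeff v g) := by
        refine Finset.sum_congr rfl fun v hv => ?_
        rw [euler_mono]
        congr 1
        have hc : coeff v g ≠ 0 := (mem_support_iff).mp hv
        have := hg hc
        rw [Finsupp.degree_eq_weight_one]
        exact this
    _ = k • g := by rw [← Finset.smul_sum, ← g.as_sum]

lemma pderiv_mem {m k : ℕ} (g : MvPolynomial (Fin m) ℝ)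
    (hg : g ∈ homogeneousSubmodule (Fin m) ℝ (k+1)) (i : Fin m) :
    pderiv i g ∈ homogeneousSubmodule (Fin m) ℝ k := by
  conv_rhs => rw [g.as_sum]
  rw [map_sum]
  refine Submodule.sum_mem _ fun v hv => ?_
  rw [pderiv_monomial]
  by_cases h : v i = 0
  · simp [h]
  · rw [mem_homogeneousSubmodule]
    refine isHomogeneous_monomial _ ?_
    have hc : coeff v g ≠ 0 := (mem_support_iff).mp hv
    have hd : v.degree = k + 1 := by
      rw [Finsupp.degree_eq_weight_one]; exact hg hc
    rw [degF] at hd ⊢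
    have hsub : ∀ x, ((v - Finsupp.single i 1 : Fin m →₀ ℕ)) x
        = v x - (if x = i then 1 else 0) := by
      intro x
      rw [Finsupp.tsub_apply, Finsupp.single_apply]
      by_cases hx : i = x
      · subst hx; simp
      · simp [hx, Ne.symm hx]
    rw [Finset.sum_congr rfl fun x _ => hsub x]
    rw [Finset.sum_tsub_distrib Finset.univ (fun x _ => by
      by_cases hx : x = i
      · subst hx; simpa using Nat.one_le_iff_ne_zero.mpr h
      · simp [hx])]
    rw [Finset.sum_ite_eq' Finset.univ i (fun _ => 1), if_pos (Finset.mem_univ i)]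
    omega

lemma pderiv_deg0 {m : ℕ} (g : MvPolynomial (Fin m) ℝ)
    (hg : g ∈ homogeneousSubmodule (Fin m) ℝ 0) (i : Fin m) :
    pderiv i g = 0 := by
  conv_lhs => rw [g.as_sum]
  rw [map_sum]
  refine Finset.sum_eq_zero fun v hv => ?_
  have hc : coeff v g ≠ 0 := (mem_support_iff).mp hv
  have hd : v.degree = 0 := by rw [Finsupp.degree_eq_weight_one]; exact hg hc
  have hv0 : v = 0 := (Finsupp.degree_eq_zero_iff v).mp hd
  subst hv0
  simp [pderiv_monomial]
lemma opQ_apply (f : W p q) (S : Finset (Fin (p+q))) :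
    opQ p q f S = ∑ i, (if i ∈ S then sgn p q i S • (X i * f (S.erase i)) else 0) := by
  unfold opQ
  rw [LinearMap.sum_apply, Finset.sum_apply]
  refine Finset.sum_congr rfl fun i _ => ?_
  rw [Module.End.mul_apply, xiMul_apply]
  by_cases h : i ∈ S <;> simp [h, pMul_apply]

lemma opQs_apply (f : W p q) (S : Finset (Fin (p+q))) :
    opQs p q f S
      = ∑ i, (if i ∈ S then 0 else sgn p q i (insert i S) • pderiv i (f (insert i S))) := by
  unfold opQs
  rw [LinearMap.sum_apply, Finset.sum_apply]
  refine Finset.sum_congr rfl fun i _ => ?_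
  rw [Module.End.mul_apply, xiD_apply]
  by_cases h : i ∈ S <;> simp [h, pD_apply]

lemma Qmem {k κ : ℕ} {f : W p q} (hf : f ∈ Wc p q k κ) : opQ p q f ∈ Wc p q (k+1) (κ+1) := by
  obtain ⟨h1, h2⟩ := hf
  constructor
  · intro S
    rw [opQ_apply]
    refine Submodule.sum_mem _ fun i _ => ?_
    by_cases h : i ∈ S
    · rw [if_pos h]
      refine Submodule.smul_mem _ _ ?_
      rw [mem_homogeneousSubmodule]
      have := (isHomogeneous_X ℝ i).mul ((mem_homogeneousSubmodule _ _).mp (h1 (S.erase i)))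
      simpa [Nat.add_comm] using this
    · rw [if_neg h]; exact Submodule.zero_mem _
  · intro S hS
    rw [opQ_apply]
    refine Finset.sum_eq_zero fun i _ => ?_
    by_cases h : i ∈ S
    · rw [if_pos h, h2 (S.erase i) (by rw [Finset.card_erase_of_mem h]; have hpos : 0 < S.card := Finset.card_pos.mpr ⟨i, h⟩; omega),
        mul_zero, smul_zero]
    · rw [if_neg h]

lemma Qsmem {k κ : ℕ} {f : W p q} (hf : f ∈ Wc p q (k+1) (κ+1)) : opQs p q f ∈ Wc p q k κ := by
  obtain ⟨h1, h2⟩ := hf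
  constructor
  · intro S
    rw [opQs_apply]
    refine Submodule.sum_mem _ fun i _ => ?_
    by_cases h : i ∈ S
    · rw [if_pos h]; exact Submodule.zero_mem _
    · rw [if_neg h]
      exact Submodule.smul_mem _ _ (pderiv_mem _ (h1 (insert i S)) i)
  · intro S hS
    rw [opQs_apply]
    refine Finset.sum_eq_zero fun i _ => ?_
    by_cases h : i ∈ S
    · rw [if_pos h]
    · rw [if_neg h, h2 (insert i S) (by rw [Finset.card_insert_of_notMem h]; omega),
        map_zero, smul_zero]

lemma Qs_zero_k {κ : ℕ} {f : W p q} (hf : f ∈ Wc p q 0 κ) : opQs p q f = 0 := by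
  funext S
  rw [opQs_apply]
  refine Finset.sum_eq_zero fun i _ => ?_
  by_cases h : i ∈ S
  · rw [if_pos h]
  · rw [if_neg h, pderiv_deg0 _ (hf.1 (insert i S)) i, smul_zero]

lemma Qs_zero_kappa {k : ℕ} {f : W p q} (hf : f ∈ Wc p q k 0) : opQs p q f = 0 := by
  funext S
  rw [opQs_apply]
  refine Finset.sum_eq_zero fun i _ => ?_
  by_cases h : i ∈ S
  · rw [if_pos h]
  · rw [if_neg h, hf.2 (insert i S) (by rw [Finset.card_insert_of_notMem h]; omega),
      map_zero, smul_zero]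

lemma opE_on {k κ : ℕ} {f : W p q} (hf : f ∈ Wc p q k κ) : opE p q f = (k:ℝ) • f := by
  funext S
  unfold opE
  rw [LinearMap.sum_apply, Finset.sum_apply]
  have : ∀ i : Fin (p+q), (pMul p q i * pD p q i) f S = X i * pderiv i (f S) := fun i => rfl
  rw [Finset.sum_congr rfl fun i _ => this i, euler_hom (f S) (hf.1 S)]
  rw [Pi.smul_apply, Nat.cast_smul_eq_nsmul]

lemma opS_on {k κ : ℕ} {f : W p q} (hf : f ∈ Wc p q k κ) : opS p q f = (κ:ℝ) • f := by
  funext S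
  unfold opS
  rw [LinearMap.sum_apply, Finset.sum_apply]
  have hterm : ∀ i : Fin (p+q), (xiMul p q i * xiD p q i) f S = if i ∈ S then f S else 0 := by
    intro i
    rw [Module.End.mul_apply, xiMul_apply]
    by_cases h : i ∈ S
    · rw [if_pos h, if_pos h, xiD_apply, if_neg (Finset.notMem_erase i S),
        Finset.insert_erase h, smul_smul, sgn_mul_self, one_smul]
    · rw [if_neg h, if_neg h]
  rw [Finset.sum_congr rfl fun i _ => hterm i]
  rw [Finset.sum_ite_mem, Finset.univ_inter, Finset.sum_const]
  by_cases hS : S.card = κ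
  · rw [hS, Pi.smul_apply, Nat.cast_smul_eq_nsmul]
  · rw [hf.2 S hS, Pi.smul_apply, hf.2 S hS, smul_zero, smul_zero]
lemma hodge {k κ : ℕ} {f : W p q} (hf : f ∈ Wc p q k κ) :
    opQ p q (opQs p q f) + opQs p q (opQ p q f) = (((p:ℝ) + q + k - κ)) • f := by
  have h := congrArg (fun T : Module.End ℝ (W p q) => T f) (anticomm (p := p) (q := q))
  simp only [LinearMap.add_apply, Module.End.mul_apply, LinearMap.sub_apply,
    LinearMap.smul_apply, Module.End.one_apply] at h
  rw [h, opE_on hf, opS_on hf, ← sub_smul, ← add_smul]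
  congr 1
  ring

lemma QQ_zero (f : W p q) : opQ p q (opQ p q f) = 0 := by
  have := congrArg (fun T : Module.End ℝ (W p q) => T f) (opQ_mul_opQ (p := p) (q := q))
  simpa using this

lemma QsQs_zero (f : W p q) : opQs p q (opQs p q f) = 0 := by
  have := congrArg (fun T : Module.End ℝ (W p q) => T f) (opQs_mul_opQs (p := p) (q := q))
  simpa using this

/-- For every bidegree `(k,κ)` with `n + k − κ > 0` (integer indices, with
the convention that components with a negative index vanish): `ker Q ∩ W_{k,κ} = Q(W_{k−1,κ−1})`,
`ker Q* ∩ W_{k,κ} = Q*(W_{k+1,κ+1})`, and moreover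
`ker Q* ∩ W_{k,κ} = Q*(ker Q ∩ W_{k+1,κ+1})`. -/
theorem statement3 (p q : ℕ) (hn : 1 ≤ p + q) :
    ∀ k κ : ℤ, 0 < (p + q : ℤ) + k - κ →
      LinearMap.ker (opQ p q) ⊓ WcZ p q k κ = (WcZ p q (k-1) (κ-1)).map (opQ p q) ∧
      LinearMap.ker (opQs p q) ⊓ WcZ p q k κ = (WcZ p q (k+1) (κ+1)).map (opQs p q) ∧
      LinearMap.ker (opQs p q) ⊓ WcZ p q k κ =
        (LinearMap.ker (opQ p q) ⊓ WcZ p q (k+1) (κ+1)).map (opQs p q) := by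
  intro k κ hpos
  by_cases hnn : 0 ≤ k ∧ 0 ≤ κ
  · -- main case
    obtain ⟨hk, hκ⟩ := hnn
    set K := k.toNat with hK
    set C := κ.toNat with hC
    have hWc : WcZ p q k κ = Wc p q K C := if_pos ⟨hk, hκ⟩
    set c : ℝ := (p:ℝ) + q + K - C with hc
    have hc0 : c ≠ 0 := by
      have h1 : (0:ℤ) < (p+q : ℤ) + K - C := by omega
      have h2 : (0:ℝ) < ((p+q : ℤ) + K - C : ℤ) := by exact_mod_cast h1
      push_cast at h2
      rw [hc]
      intro h
      rw [h] at h2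
      · linarith
    -- statement 2 (and 3) shared pieces
    have hWc2 : WcZ p q (k+1) (κ+1) = Wc p q (K+1) (C+1) := by
      rw [WcZ, if_pos ⟨by omega, by omega⟩]
      congr 1 <;> omega
    have main2sub : ∀ f : W p q, opQs p q f = 0 → f ∈ Wc p q K C →
        ∃ g, (opQ p q g = 0 ∧ g ∈ Wc p q (K+1) (C+1)) ∧ opQs p q g = f := by
      intro f hker hfW
      refine ⟨c⁻¹ • opQ p q f, ⟨?_, Submodule.smul_mem _ _ (Qmem hfW)⟩, ?_⟩
      · rw [map_smul, QQ_zero, smul_zero]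
      · have h := hodge hfW
        rw [hker, map_zero, zero_add] at h
        rw [map_smul, h, smul_smul, inv_mul_cancel₀ hc0, one_smul]
    have main2 : LinearMap.ker (opQs p q) ⊓ WcZ p q k κ
        = (WcZ p q (k+1) (κ+1)).map (opQs p q) := by
      apply le_antisymm
      · rintro f ⟨hker, hfW⟩
        rw [hWc] at hfW
        replace hker : opQs p q f = 0 := hker
        obtain ⟨g, ⟨_, hgW⟩, hgf⟩ := main2sub f hker hfW
        exact ⟨g, by rw [hWc2]; exact hgW, hgf⟩
      · rintro f ⟨g, hg, rfl⟩
        rw [hWc2] at hg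
        exact ⟨LinearMap.mem_ker.mpr (QsQs_zero g), by rw [hWc]; exact Qsmem hg⟩
    have main3 : LinearMap.ker (opQs p q) ⊓ WcZ p q k κ
        = (LinearMap.ker (opQ p q) ⊓ WcZ p q (k+1) (κ+1)).map (opQs p q) := by
      apply le_antisymm
      · rintro f ⟨hker, hfW⟩
        rw [hWc] at hfW
        replace hker : opQs p q f = 0 := hker
        obtain ⟨g, ⟨hgker, hgW⟩, hgf⟩ := main2sub f hker hfW
        exact ⟨g, ⟨LinearMap.mem_ker.mpr hgker, by rw [hWc2]; exact hgW⟩, hgf⟩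
      · rw [main2]
        exact Submodule.map_mono inf_le_right
    refine ⟨?_, main2, main3⟩
    -- statement 1
    apply le_antisymm
    · rintro f ⟨hker, hfW⟩
      rw [hWc] at hfW
      replace hker : opQ p q f = 0 := hker
      by_cases h0 : 1 ≤ K ∧ 1 ≤ C
      · obtain ⟨hK1, hC1⟩ := h0
        have hWc1 : WcZ p q (k-1) (κ-1) = Wc p q (K-1) (C-1) := by
          rw [WcZ, if_pos ⟨by omega, by omega⟩]
          congr 1 <;> omega
        have h := hodge hfW
        rw [hker, map_zero, add_zero] at h
        refine ⟨c⁻¹ • opQs p q f, ?_, ?_⟩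
        · rw [hWc1]
          refine Submodule.smul_mem _ _ (Qsmem ?_)
          rw [Nat.sub_add_cancel hK1, Nat.sub_add_cancel hC1]
          exact hfW
        · rw [map_smul, h, smul_smul, inv_mul_cancel₀ hc0, one_smul]
      · have hqs : opQs p q f = 0 := by
          rcases Nat.lt_or_ge K 1 with h1 | h1
          · exact Qs_zero_k (by rw [show K = 0 by omega] at hfW; exact hfW)
          · have h2 : C = 0 := by omega
            exact Qs_zero_kappa (by rw [h2] at hfW; exact hfW)
        have h := hodge hfW
        rw [hker, hqs, map_zero, map_zero, add_zero] at h
        have hf0 : f = 0 := by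
          have h2 : f = c⁻¹ • (c • f) := by
            rw [smul_smul, inv_mul_cancel₀ hc0, one_smul]
          rw [h2, ← h, smul_zero]
        rw [hf0]
        exact Submodule.zero_mem _
    · rintro f ⟨g, hg, rfl⟩
      by_cases h0 : 0 ≤ k - 1 ∧ 0 ≤ κ - 1
      · have hWc1 : WcZ p q (k-1) (κ-1) = Wc p q (K-1) (C-1) := by
          rw [WcZ, if_pos h0]
          congr 1 <;> omega
        rw [hWc1] at hg
        refine ⟨LinearMap.mem_ker.mpr (QQ_zero g), ?_⟩
        rw [hWc]
        have := Qmem hg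
        rw [Nat.sub_add_cancel (by omega : 1 ≤ K), Nat.sub_add_cancel (by omega : 1 ≤ C)] at this
        exact this
      · have : WcZ p q (k-1) (κ-1) = ⊥ := if_neg h0
        rw [this] at hg
        have hg0 : g = 0 := hg
        rw [hg0, map_zero]
        exact Submodule.zero_mem _
  · -- a negative index: everything is trivial
    have hWc : WcZ p q k κ = ⊥ := if_neg hnn
    have hbot : LinearMap.ker (opQ p q) ⊓ WcZ p q k κ = ⊥ := by rw [hWc, inf_bot_eq]
    have hbot' : LinearMap.ker (opQs p q) ⊓ WcZ p q k κ = ⊥ := by rw [hWc, inf_bot_eq]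
    have hneg : k < 0 ∨ κ < 0 := by omega
    have hmap2 : (WcZ p q (k+1) (κ+1)).map (opQs p q) = ⊥ := by
      by_cases h1 : 0 ≤ k + 1 ∧ 0 ≤ κ + 1
      · have hWc2 : WcZ p q (k+1) (κ+1) = Wc p q (k+1).toNat (κ+1).toNat := if_pos h1
        rw [eq_bot_iff]
        rintro f ⟨g, hg, rfl⟩
        rw [hWc2] at hg
        rcases hneg with h | h
        · have hk0 : (k+1).toNat = 0 := by omega
          rw [hk0] at hg
          rw [Qs_zero_k hg]
          exact Submodule.zero_mem ⊥
        · have hκ0 : (κ+1).toNat = 0 := by omega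
          rw [hκ0] at hg
          rw [Qs_zero_kappa hg]
          exact Submodule.zero_mem ⊥
      · have : WcZ p q (k+1) (κ+1) = ⊥ := if_neg h1
        rw [this, Submodule.map_bot]
    refine ⟨?_, ?_, ?_⟩
    · rw [hbot]
      have : WcZ p q (k-1) (κ-1) = ⊥ := if_neg (by omega)
      rw [this, Submodule.map_bot]
    · rw [hbot', hmap2]
    · rw [hbot', eq_comm, eq_bot_iff]
      calc (LinearMap.ker (opQ p q) ⊓ WcZ p q (k+1) (κ+1)).map (opQs p q)
          ≤ (WcZ p q (k+1) (κ+1)).map (opQs p q) := Submodule.map_mono inf_le_right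
        _ = ⊥ := hmap2
        _ ≤ ⊥ := le_refl _
end

end SpinQuant
end

section
/- Eigenvector perturbation lemma: let K be a field, V a K-vector space which is the internal direct sum of subspaces (V_l)_{l ∈ ℕ}, and let C, N be linear endomorphisms of V with C(V_l) ⊆ V_l for all l and N(V_l) ⊆ V_{l−1} for all l (with V_{−1} := 0). Fix k ∈ ℕ, γ ∈ K, and P_k ∈ V_k with C P_k = γ P_k. If for every l < k the restriction of C − γ·id to V_l is a bijection of V_l, then there exists a unique P ∈ V_0 + V_1 + … + V_{k−1} such that (C + N)(P_k + P) = γ (P_k + P). -/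
/-- eigenvector perturbation lemma.  Let `V` be a vector space over a
field `K`, internally graded by subspaces `(V_l)_{l ∈ ℕ}`, let `C` be an endomorphism
preserving the grading and `N` an endomorphism lowering the degree by one (with the
convention `V_{−1} = 0`).  If `P_k ∈ V_k` satisfies `C P_k = γ P_k` and, for every `l < k`,
`C − γ·id` restricts to a bijection of `V_l`, then there is a unique
`P ∈ V_0 + ⋯ + V_{k−1}` such that `P_k + P` is an eigenvector of `C + N` with
eigenvalue `γ`. -/
theorem statement14 (K : Type*) [Field K] (V : Type*) [AddCommGroup V] [Module K V]
    (Vl : ℕ → Submodule K V) (hV : DirectSum.IsInternal Vl)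
    (C N : Module.End K V)
    (hC : ∀ l, ∀ x ∈ Vl l, C x ∈ Vl l)
    (hN0 : ∀ x ∈ Vl 0, N x = 0)
    (hN : ∀ l, ∀ x ∈ Vl (l + 1), N x ∈ Vl l)
    (k : ℕ) (γ : K) (Pk : V) (hPk : Pk ∈ Vl k) (hCPk : C Pk = γ • Pk)
    (hbij : ∀ l < k,
      (∀ x ∈ Vl l, C x - γ • x = 0 → x = 0) ∧
      (∀ y ∈ Vl l, ∃ x ∈ Vl l, C x - γ • x = y)) :
    ∃! P : V, P ∈ (⨆ l ∈ Finset.range k, Vl l) ∧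
      (C + N) (Pk + P) = γ • (Pk + P) := by
  classical
  set W : ℕ → Submodule K V := fun n => ⨆ l ∈ Finset.range n, Vl l with hWdef
  have hle : ∀ {l n : ℕ}, l < n → Vl l ≤ W n := fun {l n} h =>
    le_biSup _ (Finset.mem_range.mpr h)
  have W0 : W 0 = ⊥ := by simp [hWdef]
  have Wsucc : ∀ n, W (n + 1) = W n ⊔ Vl n := by
    intro n
    simp only [hWdef, Finset.range_add_one]
    rw [Finset.iSup_insert, sup_comm]
  have hWmono : ∀ {a b : ℕ}, a ≤ b → W a ≤ W b := by
    intro a b hab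
    exact biSup_mono (fun l hl => Finset.mem_range.mpr (lt_of_lt_of_le (Finset.mem_range.mp hl) hab))
  have hdisj : ∀ n, Disjoint (W n) (Vl n) := by
    intro n
    have hWle : W n ≤ ⨆ j, ⨆ _ : j ≠ n, Vl j :=
      iSup₂_le fun l hl => le_biSup _ (Finset.mem_range.mp hl).ne
    exact ((hV.submodule_iSupIndep n).mono_right hWle).symm
  set F : Module.End K V := C + N - γ • 1 with hFdef
  have hF : ∀ x, F x = C x + N x - γ • x := by
    intro x
    simp [hFdef]
  have hNW : ∀ l, ∀ x ∈ Vl l, N x ∈ W l := by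
    intro l x hx
    cases l with
    | zero => rw [hN0 x hx]; exact zero_mem _
    | succ m => exact hle (Nat.lt_succ_self m) (hN m x hx)
  have hmaps : ∀ n, ∀ x ∈ W n, F x ∈ W n := by
    intro n
    have : W n ≤ Submodule.comap F (W n) := by
      refine iSup₂_le fun l hl x hx => ?_
      have hl' := Finset.mem_range.mp hl
      have h1 : C x ∈ W n := hle hl' (hC l x hx)
      have h2 : N x ∈ W n := hWmono hl'.le (hNW l x hx)
      have h3 : γ • x ∈ W n := hle hl' (Submodule.smul_mem _ _ hx)
      simpa [Submodule.mem_comap, hF] using sub_mem (add_mem h1 h2) h3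
    exact fun x hx => this hx
  have keyInj : ∀ n, (∀ l < n, ∀ x ∈ Vl l, C x - γ • x = 0 → x = 0) →
      ∀ x ∈ W n, F x = 0 → x = 0 := by
    intro n
    induction n with
    | zero => intro _ x hx _; simpa [W0] using hx
    | succ m ih =>
      intro hb x hx hfx
      rw [Wsucc] at hx
      obtain ⟨a, ha, b, hbV, rfl⟩ := Submodule.mem_sup.mp hx
      have hexp : F (a + b) = (F a + N b) + (C b - γ • b) := by
        rw [map_add, hF b]; abel
      have hsum : (F a + N b) + (C b - γ • b) = 0 := by rw [← hexp]; exact hfx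
      have h1 : F a + N b ∈ W m := add_mem (hmaps m a ha) (hNW m b hbV)
      have h2 : C b - γ • b ∈ Vl m := sub_mem (hC m b hbV) (Submodule.smul_mem _ _ hbV)
      have hv0 : C b - γ • b = 0 := by
        have hmem : C b - γ • b ∈ W m := by
          have : C b - γ • b = -(F a + N b) := by
            rw [eq_neg_iff_add_eq_zero, add_comm]; exact hsum
          rw [this]; exact neg_mem h1
        exact (Submodule.disjoint_def.mp (hdisj m)) _ hmem h2
      have hb0 : b = 0 := hb m (Nat.lt_succ_self m) b hbV hv0
      subst hb0
      have ha0 : F a = 0 := by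
        have := hsum
        rw [hv0, add_zero, map_zero, add_zero] at this
        exact this
      have := ih (fun l hl => hb l (hl.trans (Nat.lt_succ_self m))) a ha ha0
      simp [this]
  have keySurj : ∀ n, (∀ l < n, ∀ y ∈ Vl l, ∃ x ∈ Vl l, C x - γ • x = y) →
      ∀ y ∈ W n, ∃ x ∈ W n, F x = y := by
    intro n
    induction n with
    | zero =>
      intro _ y hy
      rw [W0] at hy
      exact ⟨0, zero_mem _, by rw [map_zero]; exact ((Submodule.mem_bot _).mp hy).symm⟩
    | succ m ih =>
      intro hb y hy
      rw [Wsucc] at hy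
      obtain ⟨y', hy', ym, hym, rfl⟩ := Submodule.mem_sup.mp hy
      obtain ⟨b, hbV, hbeq⟩ := hb m (Nat.lt_succ_self m) ym hym
      have hNb : N b ∈ W m := hNW m b hbV
      obtain ⟨x', hx'W, hx'eq⟩ := ih (fun l hl => hb l (hl.trans (Nat.lt_succ_self m)))
        (y' - N b) (sub_mem hy' hNb)
      refine ⟨x' + b, ?_, ?_⟩
      · rw [Wsucc]
        exact add_mem (Submodule.mem_sup_left hx'W) (Submodule.mem_sup_right hbV)
      · rw [map_add, hx'eq, hF b, ← hbeq]; abel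
  have hNPk : N Pk ∈ W k := hNW k Pk hPk
  have hiff : ∀ P : V, ((C + N) (Pk + P) = γ • (Pk + P)) ↔ F P = -(N Pk) := by
    intro P
    rw [← sub_eq_zero]
    have hcalc : (C + N) (Pk + P) - γ • (Pk + P) = F P + N Pk := by
      simp only [LinearMap.add_apply, map_add, smul_add, hCPk, hF]
      abel
    rw [hcalc, add_eq_zero_iff_eq_neg]
  obtain ⟨P, hPW, hPF⟩ := keySurj k (fun l hl => (hbij l hl).2) (-(N Pk)) (neg_mem hNPk)
  refine ⟨P, ⟨hPW, (hiff P).mpr hPF⟩, ?_⟩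
  rintro Q ⟨hQW, hQeq⟩
  have hQF : F Q = -(N Pk) := (hiff Q).mp hQeq
  have : F (Q - P) = 0 := by rw [map_sub, hQF, hPF, sub_self]
  have := keyInj k (fun l hl => (hbij l hl).1) (Q - P) (sub_mem hQW hPW) this
  exact sub_eq_zero.mp this
end
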